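/- arXiv:1402.6659 — 3 statements merged into one kernel-verified Lean document; each statement's English description precedes it below -/
import Mathlib

section
/- If (C_i)_{i∈I} is a κ-small family of κ-accessible categories, then the product category ∏_{i∈I} C_i is κ-accessible, and each projection functor is strongly κ-accessible (it preserves small κ-filtered colimits and sends κ-presentable objects to κ-presentable objects). -/
universe v u u₂

open CategoryTheory Limits Opposite

noncomputable section

/-- A small category with fewer than `κ` morphisms. -/
def CardSmallCat (K : Type v) [SmallCategory K] (κ : Cardinal.{v}) : Prop :=
  Cardinal.mk (Σ p : K × K, p.1 ⟶ p.2) < κ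

/-- `J` is `κ`-filtered: every `κ`-small diagram in `J` admits a cocone. -/
def IsCardFiltered (J : Type v) [SmallCategory J] (κ : Cardinal.{v}) : Prop :=
  ∀ (K : Type v) [SmallCategory K], CardSmallCat K κ → ∀ F : K ⥤ J, Nonempty (Cocone F)

/-- `A` is `κ`-presentable: `Hom(A,-)` preserves colimits of small `κ`-filtered diagrams. -/
def IsCardPresentable {C : Type u} [Category.{v} C] (κ : Cardinal.{v}) (A : C) : Prop :=
  ∀ (J : Type v) [SmallCategory J], IsCardFiltered J κ →
    Nonempty (PreservesColimitsOfShape J (coyoneda.obj (op A)))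

/-- `A` is `(κ, lam)`-presentable: `Hom(A,-)` preserves colimits of `lam`-small
`κ`-filtered diagrams. -/
def IsRelPresentable {C : Type u} [Category.{v} C] (κ lam : Cardinal.{v}) (A : C) : Prop :=
  ∀ (J : Type v) [SmallCategory J], CardSmallCat J lam → IsCardFiltered J κ →
    Nonempty (PreservesColimitsOfShape J (coyoneda.obj (op A)))

/-- `C` is a `κ`-accessible category. -/
def IsCardAccessible (C : Type u) [Category.{v} C] (κ : Cardinal.{v}) : Prop :=
  (∀ (J : Type v) [SmallCategory J], IsCardFiltered J κ → HasColimitsOfShape J C) ∧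
  ∃ G : Set C, Small.{v} G ∧ (∀ A ∈ G, IsCardPresentable κ A) ∧
    ∀ X : C, ∃ (J : Type v) (inst : SmallCategory J) (F : J ⥤ C) (c : Cocone F),
      IsCardFiltered J κ ∧ (∀ j, F.obj j ∈ G) ∧ Nonempty (IsColimit c) ∧ Nonempty (c.pt ≅ X)

/-- `F` preserves colimits of small `κ`-filtered diagrams. -/
def PreservesCardFiltered {C : Type u} [Category.{v} C] {D : Type u₂} [Category.{v} D]
    (F : C ⥤ D) (κ : Cardinal.{v}) : Prop :=
  ∀ (J : Type v) [SmallCategory J], IsCardFiltered J κ →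
    Nonempty (PreservesColimitsOfShape J F)

/-- `F` is a strongly `κ`-accessible functor. -/
def StronglyCardAccessible {C : Type u} [Category.{v} C] {D : Type u₂} [Category.{v} D]
    (F : C ⥤ D) (κ : Cardinal.{v}) : Prop :=
  IsCardAccessible C κ ∧ IsCardAccessible D κ ∧ PreservesCardFiltered F κ ∧
    ∀ X : C, IsCardPresentable κ X → IsCardPresentable κ (F.obj X)

/-- `κ ◁ lam`: `κ` is sharply less than `lam`. -/
def SharplyLess (κ lam : Cardinal.{u}) : Prop :=
  κ < lam ∧ ∀ X : Type u, Cardinal.mk X < lam →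
    ∃ S : Set {s : Set X // Cardinal.mk s < κ},
      Cardinal.mk S < lam ∧ ∀ t : {s : Set X // Cardinal.mk s < κ}, ∃ w ∈ S, t.1 ⊆ w.1

/-! ### Auxiliary shape categories -/

/-- Hom family for the parallel-family shape category. -/
def PHom (A : Type v) : Bool → Bool → Type v
  | false, false => PUnit
  | false, true => A
  | true, false => PEmpty
  | true, true => PUnit

/-- The parallel-family shape category: two objects with an `A`-indexed family of
parallel arrows between them. -/
structure ParCat (A : Type v) : Type v where
  b : Bool

/-- Identities for `PHom`. -/
def PHom.pid (A : Type v) : ∀ b, PHom A b b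
  | false => PUnit.unit
  | true => PUnit.unit

/-- Composition for `PHom`. -/
def PHom.pcomp {A : Type v} : ∀ {a b c : Bool}, PHom A a b → PHom A b c → PHom A a c
  | false, false, _, _, g => g
  | false, true, true, f, _ => f
  | false, true, false, _, g => g.elim
  | true, true, _, _, g => g
  | true, false, _, f, _ => f.elim

instance ParCat.category (A : Type v) : SmallCategory (ParCat A) where
  Hom X Y := PHom A X.b Y.b
  id X := PHom.pid A X.b
  comp f g := PHom.pcomp f g
  id_comp {X Y} f := by
    rcases X with ⟨a⟩; rcases Y with ⟨b⟩
    cases a <;> cases b <;> first | rfl | cases f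
  comp_id {X Y} f := by
    rcases X with ⟨a⟩; rcases Y with ⟨b⟩
    cases a <;> cases b <;> first | rfl | cases f
  assoc {W X Y Z} f g h := by
    rcases W with ⟨a⟩; rcases X with ⟨b⟩; rcases Y with ⟨c⟩; rcases Z with ⟨d⟩
    cases a <;> cases b <;> cases c <;> cases d <;>
      first | rfl | cases f | cases g | cases h

/-- The functor from the parallel-family shape determined by a family of parallel arrows. -/
def parFunctor {A : Type v} {J : Type v} [SmallCategory J] (X Y : J) (f : A → (X ⟶ Y)) :
    ParCat A ⥤ J where
  obj o := bif o.b then Y else X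
  map {o o'} g :=
    match o, o', g with
    | ⟨false⟩, ⟨false⟩, _ => 𝟙 X
    | ⟨false⟩, ⟨true⟩, a => f a
    | ⟨true⟩, ⟨true⟩, _ => 𝟙 Y
    | ⟨true⟩, ⟨false⟩, g => g.elim
  map_id o := by rcases o with ⟨a⟩; cases a <;> rfl
  map_comp {o o' o''} g g' := by
    rcases o with ⟨a⟩; rcases o' with ⟨b⟩; rcases o'' with ⟨c⟩
    cases a <;> cases b <;> cases c <;>
      first
        | exact (Category.id_comp _).symm
        | exact (Category.comp_id _).symm
        | exact PEmpty.elim g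
        | exact PEmpty.elim g'

/-! ### Cardinality lemmas -/

lemma cardSmallCat_of_bound {κ : Cardinal.{v}} (hκ : κ.IsRegular) (K : Type v) [SmallCategory K]
    (c : Cardinal.{v}) (hK : Cardinal.mk K < κ) (hc : c < κ)
    (hb : ∀ a b : K, Cardinal.mk (a ⟶ b) ≤ c) : CardSmallCat K κ := by
  have h1 : Cardinal.mk (Σ p : K × K, p.1 ⟶ p.2) ≤ Cardinal.mk (K × K) * c := by
    rw [Cardinal.mk_sigma]
    calc (Cardinal.sum fun p : K × K => Cardinal.mk (p.1 ⟶ p.2))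
        ≤ Cardinal.sum fun _ : K × K => c := Cardinal.sum_le_sum _ _ fun _ => hb _ _
      _ = Cardinal.mk (K × K) * c := Cardinal.sum_const' _ _
  refine lt_of_le_of_lt h1 (Cardinal.mul_lt_of_lt hκ.aleph0_le ?_ hc)
  have h2 : Cardinal.mk (K × K) = Cardinal.mk K * Cardinal.mk K := by simp
  rw [h2]
  exact Cardinal.mul_lt_of_lt hκ.aleph0_le hK hK

lemma finite_lt_of_regular {κ : Cardinal.{v}} (hκ : κ.IsRegular) (A : Type v) [Finite A] :
    Cardinal.mk A < κ :=
  (Cardinal.lt_aleph0_of_finite A).trans_le hκ.aleph0_le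

lemma one_lt_of_regular {κ : Cardinal.{v}} (hκ : κ.IsRegular) : (1 : Cardinal.{v}) < κ :=
  Cardinal.one_lt_aleph0.trans_le hκ.aleph0_le

lemma cardSmallCat_discrete {κ : Cardinal.{v}} (hκ : κ.IsRegular) (A : Type v)
    (hA : Cardinal.mk A < κ) : CardSmallCat (Discrete A) κ := by
  refine cardSmallCat_of_bound hκ _ 1 ?_ (one_lt_of_regular hκ) ?_
  · rwa [Cardinal.mk_congr CategoryTheory.discreteEquiv]
  · intro a b
    exact Cardinal.le_one_iff_subsingleton.mpr inferInstance

instance (A : Type v) : Finite (ParCat A) :=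
  Finite.of_equiv Bool ⟨ParCat.mk, ParCat.b, fun _ => rfl, fun _ => rfl⟩

lemma cardSmallCat_parCat {κ : Cardinal.{v}} (hκ : κ.IsRegular) (A : Type v)
    (hA : Cardinal.mk A < κ) : CardSmallCat (ParCat A) κ := by
  refine cardSmallCat_of_bound hκ _ (Cardinal.mk A + 1) (finite_lt_of_regular hκ _)
    (Cardinal.add_lt_of_lt hκ.aleph0_le hA (one_lt_of_regular hκ)) ?_
  rintro ⟨a⟩ ⟨b⟩
  show Cardinal.mk (PHom A a b) ≤ _
  cases a <;> cases b
  · exact le_trans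
      (Cardinal.le_one_iff_subsingleton.mpr (inferInstanceAs (Subsingleton PUnit)))
      (self_le_add_left 1 _)
  · exact self_le_add_right _ _
  · exact le_trans
      (Cardinal.le_one_iff_subsingleton.mpr (inferInstanceAs (Subsingleton PEmpty)))
      (self_le_add_left 1 _)
  · exact le_trans
      (Cardinal.le_one_iff_subsingleton.mpr (inferInstanceAs (Subsingleton PUnit)))
      (self_le_add_left 1 _)

/-! ### Basic consequences of `κ`-filteredness -/

section FilteredBasics

variable {κ : Cardinal.{v}} {J : Type v} [SmallCategory J]

lemma IsCardFiltered.nonempty (hκ : κ.IsRegular) (hJ : IsCardFiltered J κ) : Nonempty J := by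
  obtain ⟨c⟩ := hJ (Discrete PEmpty.{v + 1})
    (cardSmallCat_discrete hκ _ (by rw [Cardinal.mk_eq_zero]; exact hκ.pos))
    (Functor.empty J)
  exact ⟨c.pt⟩

lemma exists_fan (hκ : κ.IsRegular) (hJ : IsCardFiltered J κ) {A : Type v}
    (hA : Cardinal.mk A < κ) (X : A → J) : ∃ (m : J) (_ : ∀ a, X a ⟶ m), True := by
  obtain ⟨c⟩ := hJ (Discrete A) (cardSmallCat_discrete hκ A hA) (Discrete.functor X)
  exact ⟨c.pt, fun a => c.ι.app ⟨a⟩, trivial⟩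

lemma exists_coeq (hκ : κ.IsRegular) (hJ : IsCardFiltered J κ) {A : Type v}
    (hA : Cardinal.mk A < κ) {X Y : J} (f : A → (X ⟶ Y)) :
    ∃ (m : J) (g : Y ⟶ m), ∀ a a', f a ≫ g = f a' ≫ g := by
  obtain ⟨c⟩ := hJ (ParCat A) (cardSmallCat_parCat hκ A hA) (parFunctor X Y f)
  have h1 : ∀ a : A, f a ≫ c.ι.app ⟨true⟩ = c.ι.app ⟨false⟩ := by
    intro a
    exact c.w (show (⟨false⟩ : ParCat A) ⟶ ⟨true⟩ from a)
  exact ⟨c.pt, c.ι.app ⟨true⟩, fun a a' => by rw [h1 a, h1 a']⟩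

lemma isFiltered_of_isCardFiltered (hκ : κ.IsRegular) (hJ : IsCardFiltered J κ) :
    IsFiltered J := by
  have hne : Nonempty J := hJ.nonempty hκ
  haveI : IsFilteredOrEmpty J := by
    constructor
    · intro X Y
      obtain ⟨m, g, -⟩ := exists_fan hκ hJ (finite_lt_of_regular hκ (ULift Bool))
        (fun b => bif b.down then X else Y)
      exact ⟨m, g ⟨true⟩, g ⟨false⟩, trivial⟩
    · intro X Y f g
      obtain ⟨m, w, hw⟩ := exists_coeq hκ hJ (finite_lt_of_regular hκ (ULift Bool))
        (fun b => bif b.down then f else g)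
      exact ⟨m, w, hw ⟨true⟩ ⟨false⟩⟩
  exact ⟨⟩

lemma IsCardFiltered.pi {I : Type v} {Jf : I → Type v} [∀ i, SmallCategory (Jf i)]
    (hJ : ∀ i, IsCardFiltered (Jf i) κ) : IsCardFiltered (∀ i, Jf i) κ := by
  intro K _ hK F
  exact ⟨pi.coconeOfCoconeCompEval fun i => Classical.choice (hJ i K hK (F ⋙ Pi.eval Jf i))⟩

end FilteredBasics

/-! ### Finality of the projections -/

lemma eval_final {κ : Cardinal.{v}} (hκ : κ.IsRegular) {I : Type v} {Jf : I → Type v}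
    [∀ i, SmallCategory (Jf i)] (hJ : ∀ i, IsCardFiltered (Jf i) κ) (i : I) :
    (Pi.eval Jf i).Final := by
  classical
  haveI : ∀ i, IsFiltered (Jf i) := fun i => isFiltered_of_isCardFiltered hκ (hJ i)
  haveI : ∀ i', Nonempty (Jf i') := fun i' => IsFiltered.nonempty
  apply Functor.final_of_exists_of_isFiltered
  · intro d
    refine ⟨Function.update (fun i' => Classical.arbitrary (Jf i')) i d, ⟨eqToHom ?_⟩⟩
    show d = Function.update (fun i' => Classical.arbitrary (Jf i')) i d i
    exact (Function.update_self i d _).symm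
  · intro d k s s'
    let n := IsFiltered.coeq s s'
    let w : k i ⟶ n := IsFiltered.coeqHom s s'
    let t : ∀ i', k i' ⟶ Function.update k i n i' := fun i' =>
      if h : i' = i then
        (by subst h; exact w ≫ eqToHom (Function.update_self i' n k).symm)
      else eqToHom (Function.update_of_ne h n k).symm
    have ht : t i = w ≫ eqToHom (Function.update_self i n k).symm := by
      simp only [t, dif_pos]
      rfl
    refine ⟨Function.update k i n, t, ?_⟩
    show s ≫ t i = s' ≫ t i
    rw [ht]
    exact (Category.assoc s w _).symm.trans
      ((congrArg (· ≫ _) (IsFiltered.coeq_condition s s')).trans (Category.assoc s' w _))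

/-! ### Colimits in pi categories -/

lemma pi_hasColimitsOfShape {I : Type v} (C : I → Type u) [∀ i, Category.{v} (C i)]
    (K : Type v) [SmallCategory K] [∀ i, HasColimitsOfShape K (C i)] :
    HasColimitsOfShape K (∀ i, C i) :=
  ⟨fun _ => pi.hasColimit_of_hasColimit_comp_eval⟩

lemma eval_preserves {I : Type v} {C : I → Type u} [∀ i, Category.{v} (C i)]
    (K : Type v) [SmallCategory K] [∀ i, HasColimitsOfShape K (C i)] (i : I) :
    PreservesColimitsOfShape K (Pi.eval C i) := by
  constructor
  intro F
  constructor
  intro c hc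
  let d : ∀ i', Cocone (F ⋙ Pi.eval C i') := fun _ => colimit.cocone _
  have hd : IsColimit (pi.coconeOfCoconeCompEval d) :=
    pi.coconeOfCoconeEvalIsColimit fun _ => colimit.isColimit _
  let e : pi.coconeOfCoconeCompEval d ≅ c := IsColimit.uniqueUpToIso hd hc
  have hdi : IsColimit ((Pi.eval C i).mapCocone (pi.coconeOfCoconeCompEval d)) := by
    refine (colimit.isColimit (F ⋙ Pi.eval C i)).ofIsoColimit (Cocones.ext (Iso.refl _) ?_)
    intro j
    exact (Category.comp_id _).trans rfl
  exact ⟨hdi.ofIsoColimit ((Cocones.functoriality F (Pi.eval C i)).mapIso e)⟩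

/-! ### Constant cocones over connected categories are colimits -/

/-- The constant cocone with identity legs. -/
def constCocone (J : Type v) [SmallCategory J] {C : Type u} [Category.{v} C] (X : C) :
    Cocone ((Functor.const J).obj X) where
  pt := X
  ι := { app := fun _ => 𝟙 X, naturality := fun _ _ f => by simp }

def constCocone_isColimit (J : Type v) [SmallCategory J] [IsConnected J] {C : Type u}
    [Category.{v} C] (X : C) : IsColimit (_root_.constCocone J X) := by
  have hne : Nonempty J := IsConnected.is_nonempty
  have key : ∀ (s : Cocone ((Functor.const J).obj X)) (j j' : J), s.ι.app j = s.ι.app j' := by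
    intro s j j'
    refine constant_of_preserves_morphisms (α := (X ⟶ s.pt)) (fun j => s.ι.app j) ?_ j j'
    intro j₁ j₂ f
    exact (s.w f).symm.trans (Category.id_comp _)
  exact
    { desc := fun s => s.ι.app (Classical.arbitrary J)
      fac := fun s j => by
        show 𝟙 X ≫ s.ι.app (Classical.arbitrary J) = s.ι.app j
        rw [Category.id_comp]
        exact key s _ j
      uniq := fun s m hm => by
        show m = s.ι.app (Classical.arbitrary J)
        rw [← hm (Classical.arbitrary J)]
        show m = 𝟙 X ≫ m
        exact (Category.id_comp m).symm }

/-! ### Presentability transfer along equivalences -/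

lemma isCardPresentable_of_equivalence {κ : Cardinal.{v}} {C : Type u} [Category.{v} C]
    {D : Type u₂} [Category.{v} D] (E : C ≌ D) (X : C) (hX : IsCardPresentable κ X) :
    IsCardPresentable κ (E.functor.obj X) := by
  intro J _ hJ
  obtain ⟨P⟩ := hX J hJ
  have iso : E.inverse ⋙ coyoneda.obj (op X) ≅ coyoneda.obj (op (E.functor.obj X)) := by
    refine NatIso.ofComponents (fun Y => Equiv.toIso ((E.toAdjunction.homEquiv X Y).symm)) ?_
    intro Y Y' f
    ext g
    exact E.toAdjunction.homEquiv_naturality_right_symm g f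
  haveI := P
  haveI : PreservesColimitsOfShape J (E.inverse ⋙ coyoneda.obj (op X)) := inferInstance
  exact ⟨preservesColimitsOfShape_of_natIso iso⟩

/-! ### κ-presentability of products of presentables -/

lemma prod_presentable {κ : Cardinal.{v}} (hκ : κ.IsRegular) {I : Type v}
    (hI : Cardinal.mk I < κ) {C : I → Type u} [∀ i, Category.{v} (C i)]
    (hcol : ∀ (i : I) (J : Type v) [SmallCategory J], IsCardFiltered J κ →
      HasColimitsOfShape J (C i))
    (X : ∀ i, C i) (hX : ∀ i, IsCardPresentable κ (X i)) :
    IsCardPresentable κ X := by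
  classical
  intro J _ hJ
  haveI : IsFiltered J := isFiltered_of_isCardFiltered hκ hJ
  haveI : ∀ i, HasColimitsOfShape J (C i) := fun i => hcol i J hJ
  constructor
  constructor
  intro F
  constructor
  intro c hc
  haveI : ∀ i, PreservesColimitsOfShape J (Pi.eval C i) := fun i => eval_preserves J i
  have hci : ∀ i, IsColimit ((Pi.eval C i).mapCocone c) := fun i => isColimitOfPreserves _ hc
  have hti : ∀ i, IsColimit ((coyoneda.obj (op (X i))).mapCocone ((Pi.eval C i).mapCocone c)) := by
    intro i
    haveI := Classical.choice (hX i J hJ)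
    exact isColimitOfPreserves _ (hci i)
  refine ⟨Types.FilteredColimit.isColimitOf _ _ ?_ ?_⟩
  · -- joint surjectivity
    intro x
    have hs : ∀ i, ∃ (j : J) (y : X i ⟶ (F.obj j) i), y ≫ (c.ι.app j) i = x i := by
      intro i
      obtain ⟨j, y, hy⟩ := Types.jointly_surjective _ (hti i) (x i)
      exact ⟨j, y, hy⟩
    choose jf yf hyf using hs
    obtain ⟨m, g, -⟩ := exists_fan hκ hJ hI jf
    refine ⟨m, (fun i => yf i ≫ (F.map (g i)) i), ?_⟩
    funext i
    show x i = (yf i ≫ (F.map (g i)) i) ≫ (c.ι.app m) i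
    have h2 : (F.map (g i)) i ≫ (c.ι.app m) i = (c.ι.app (jf i)) i := congr_fun (c.w (g i)) i
    rw [Category.assoc, h2]
    exact (hyf i).symm
  · -- joint injectivity
    intro j j' x x' hxx
    by_cases hne : Nonempty I
    · have hi : ∀ i, ∃ (k : J) (f : j ⟶ k) (f' : j' ⟶ k),
          x i ≫ (F.map f) i = x' i ≫ (F.map f') i := by
        intro i
        have heq : (coyoneda.obj (op (X i))).map ((c.ι.app j) i) (x i) =
            (coyoneda.obj (op (X i))).map ((c.ι.app j') i) (x' i) := congr_fun hxx i
        obtain ⟨k, f, f', hk⟩ := (Types.FilteredColimit.isColimit_eq_iff _ (hti i)).mp heq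
        exact ⟨k, f, f', hk⟩
      choose k f f' hk using hi
      obtain ⟨m₀, g, -⟩ := exists_fan hκ hJ hI k
      obtain ⟨m₁, w₁, hw₁⟩ := exists_coeq hκ hJ hI (fun i => f i ≫ g i)
      obtain ⟨m₂, w₂, hw₂⟩ := exists_coeq hκ hJ hI (fun i => f' i ≫ g i ≫ w₁)
      obtain ⟨i₀⟩ := hne
      refine ⟨m₂, f i₀ ≫ g i₀ ≫ w₁ ≫ w₂, (f' i₀ ≫ g i₀ ≫ w₁) ≫ w₂, ?_⟩
      funext i
      show x i ≫ (F.map (f i₀ ≫ g i₀ ≫ w₁ ≫ w₂)) i =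
        x' i ≫ (F.map ((f' i₀ ≫ g i₀ ≫ w₁) ≫ w₂)) i
      have e1 : f i₀ ≫ g i₀ ≫ w₁ ≫ w₂ = f i ≫ (g i ≫ w₁) ≫ w₂ := by
        calc f i₀ ≫ g i₀ ≫ w₁ ≫ w₂ = ((f i₀ ≫ g i₀) ≫ w₁) ≫ w₂ := by
              simp only [Category.assoc]
          _ = ((f i ≫ g i) ≫ w₁) ≫ w₂ := by rw [hw₁ i₀ i]
          _ = f i ≫ (g i ≫ w₁) ≫ w₂ := by simp only [Category.assoc]
      have e2 : (f' i₀ ≫ g i₀ ≫ w₁) ≫ w₂ = f' i ≫ (g i ≫ w₁) ≫ w₂ := by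
        calc (f' i₀ ≫ g i₀ ≫ w₁) ≫ w₂ = (f' i ≫ g i ≫ w₁) ≫ w₂ := hw₂ i₀ i
          _ = f' i ≫ (g i ≫ w₁) ≫ w₂ := by simp only [Category.assoc]
      rw [e1, e2]
      have m1 : (F.map (f i ≫ (g i ≫ w₁) ≫ w₂)) i =
          (F.map (f i)) i ≫ (F.map ((g i ≫ w₁) ≫ w₂)) i := by
        rw [F.map_comp]; rfl
      have m2 : (F.map (f' i ≫ (g i ≫ w₁) ≫ w₂)) i =
          (F.map (f' i)) i ≫ (F.map ((g i ≫ w₁) ≫ w₂)) i := by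
        rw [F.map_comp]; rfl
      rw [m1, m2, ← Category.assoc, ← Category.assoc, hk i]
    · obtain ⟨m, g, -⟩ := exists_fan hκ hJ (finite_lt_of_regular hκ (ULift Bool))
        (fun b => bif b.down then j else j')
      refine ⟨m, g ⟨true⟩, g ⟨false⟩, ?_⟩
      funext i
      exact absurd ⟨i⟩ hne

/-! ### Projections preserve κ-presentability -/

lemma eval_presentable {κ : Cardinal.{v}} (hκ : κ.IsRegular) {I : Type v} {C : I → Type u}
    [∀ i, Category.{v} (C i)] (i : I) (X : ∀ i', C i') (hX : IsCardPresentable κ X) :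
    IsCardPresentable κ (X i) := by
  classical
  intro J _ hJ
  haveI : IsFiltered J := isFiltered_of_isCardFiltered hκ hJ
  haveI : IsConnected J := IsFiltered.isConnected J
  constructor
  constructor
  intro F
  constructor
  intro c hc
  -- Reindex `I` as an `Option` type splitting off the index `i`.
  let e : Option {i' : I // i' ≠ i} ≃ I :=
    { toFun := fun o => Option.elim o i Subtype.val
      invFun := fun i' => if h : i' = i then none else some ⟨i', h⟩
      left_inv := by
        rintro (_ | ⟨i', hi'⟩)
        · simp
        · simp [hi']
      right_inv := fun i' => by by_cases h : i' = i <;> simp [h] }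
  let C' : Option {i' : I // i' ≠ i} → Type u := fun o => C (e o)
  let EE := Pi.equivalenceOfEquiv C e
  have hX' : IsCardPresentable κ (EE.symm.functor.obj X) :=
    isCardPresentable_of_equivalence EE.symm X hX
  obtain ⟨P⟩ := hX' J hJ
  -- Extend `F` to a diagram in the product indexed by `Option`.
  let G : ∀ o : Option {i' : I // i' ≠ i}, J ⥤ C' o := fun o =>
    match o with
    | none => F
    | some p => (Functor.const J).obj (X p.1)
  let Fhat : J ⥤ ∀ o, C' o := Functor.pi' G
  let dcone : ∀ o, Cocone (Fhat ⋙ Pi.eval C' o) := fun o =>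
    match o with
    | none => c
    | some p => _root_.constCocone J (X p.1)
  have hdcolim : IsColimit (pi.coconeOfCoconeCompEval dcone) :=
    pi.coconeOfCoconeEvalIsColimit fun o =>
      match o with
      | none => hc
      | some p => constCocone_isColimit J (X p.1)
  haveI := P
  have ht : IsColimit ((coyoneda.obj (op (EE.symm.functor.obj X))).mapCocone
      (pi.coconeOfCoconeCompEval dcone)) := isColimitOfPreserves _ hdcolim
  refine ⟨Types.FilteredColimit.isColimitOf _ _ ?_ ?_⟩
  · intro x
    let xhat : EE.symm.functor.obj X ⟶ (pi.coconeOfCoconeCompEval dcone).pt := fun o =>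
      match o with
      | none => x
      | some p => 𝟙 (X p.1)
    obtain ⟨j, y, hy⟩ := Types.jointly_surjective _ ht xhat
    refine ⟨j, y none, ?_⟩
    exact (congr_fun hy none).symm
  · intro j j' x x' hxx
    let xhat : EE.symm.functor.obj X ⟶ Fhat.obj j := fun o =>
      match o with
      | none => x
      | some p => 𝟙 (X p.1)
    let xhat' : EE.symm.functor.obj X ⟶ Fhat.obj j' := fun o =>
      match o with
      | none => x'
      | some p => 𝟙 (X p.1)
    have heq : ((coyoneda.obj (op (EE.symm.functor.obj X))).mapCocone
          (pi.coconeOfCoconeCompEval dcone)).ι.app j xhat =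
        ((coyoneda.obj (op (EE.symm.functor.obj X))).mapCocone
          (pi.coconeOfCoconeCompEval dcone)).ι.app j' xhat' := by
      funext o
      match o with
      | none => exact hxx
      | some p =>
        show 𝟙 (X p.1) ≫ 𝟙 (X p.1) = 𝟙 (X p.1) ≫ 𝟙 (X p.1)
        rfl
    obtain ⟨k, f, f', hk⟩ := (Types.FilteredColimit.isColimit_eq_iff _ ht).mp heq
    exact ⟨k, f, f', congr_fun hk none⟩

/-- A `κ`-small product of `κ`-accessible categories is `κ`-accessible, with strongly
`κ`-accessible projections. -/
theorem stmt6 (κ : Cardinal.{v}) (hκ : κ.IsRegular) {I : Type v} (hI : Cardinal.mk I < κ)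
    (C : I → Type u) [∀ i, Category.{v} (C i)] (h : ∀ i, IsCardAccessible (C i) κ) :
    IsCardAccessible (∀ i, C i) κ ∧ ∀ i, StronglyCardAccessible (Pi.eval C i) κ := by
  classical
  have hcol : ∀ (J : Type v) [SmallCategory J], IsCardFiltered J κ →
      HasColimitsOfShape J (∀ i, C i) := by
    intro J _ hJ
    haveI : ∀ i, HasColimitsOfShape J (C i) := fun i => (h i).1 J hJ
    exact pi_hasColimitsOfShape C J
  choose S hSsmall hSpres hSgen using fun i => (h i).2
  have main1 : IsCardAccessible (∀ i, C i) κ := by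
    refine ⟨hcol, {X | ∀ i, X i ∈ S i}, ?_, ?_, ?_⟩
    · -- smallness of the generating set
      haveI := fun i => hSsmall i
      refine small_of_injective
        (f := fun (x : {X : ∀ i, C i | ∀ i, X i ∈ S i}) (i : I) => (⟨x.1 i, x.2 i⟩ : S i)) ?_
      intro a b hab
      apply Subtype.ext
      funext i
      exact congrArg Subtype.val (congr_fun hab i)
    · -- presentability of the generators
      intro A hA
      exact prod_presentable hκ hI (fun i J _ hJ => (h i).1 J hJ) A (fun i => hSpres i _ (hA i))
    · -- every object is a κ-filtered colimit of generators
      intro X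
      choose Jf instf Ff cf hfil hobj hcolim hiso using fun i => hSgen i (X i)
      letI : ∀ i, SmallCategory (Jf i) := instf
      refine ⟨∀ i, Jf i, inferInstance, Functor.pi' (fun i => Pi.eval Jf i ⋙ Ff i),
        pi.coconeOfCoconeCompEval (fun i => (cf i).whisker (Pi.eval Jf i)),
        IsCardFiltered.pi (fun i => hfil i), fun k i => hobj i (k i), ?_, ?_⟩
      · haveI : ∀ i, (Pi.eval Jf i).Final := fun i => eval_final hκ (fun i' => hfil i') i
        exact ⟨pi.coconeOfCoconeEvalIsColimit fun i =>
          (Functor.Final.isColimitWhiskerEquiv (Pi.eval Jf i) (cf i)).symm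
            (Classical.choice (hcolim i))⟩
      · have e := fun i => Classical.choice (hiso i)
        exact ⟨{ hom := fun i => (e i).hom
                 inv := fun i => (e i).inv
                 hom_inv_id := by funext i; exact (e i).hom_inv_id
                 inv_hom_id := by funext i; exact (e i).inv_hom_id }⟩
  refine ⟨main1, fun i => ⟨main1, h i, ?_, ?_⟩⟩
  · intro J _ hJ
    haveI : ∀ i', HasColimitsOfShape J (C i') := fun i' => (h i').1 J hJ
    exact ⟨eval_preserves J i⟩
  · intro X hX
    exact eval_presentable hκ i X hX

end
end

section
/- Let C be a locally small category, D a κ-small category, and λ ≥ κ a regular cardinal such that C has colimits of small λ-filtered diagrams. If A : D → C is a diagram all of whose vertices are λ-presentable objects of C, then A is a λ-presentable object of the functor category Fun(D, C). -/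
universe v u u₂

open CategoryTheory Limits Opposite

noncomputable section

section Aux

/-- A thin small category with fewer than `κ` objects is `κ`-small, for `κ` regular. -/
lemma cardSmallCat_of_thin (K : Type v) [SmallCategory K]
    (h : ∀ a b : K, Subsingleton (a ⟶ b)) {κ : Cardinal.{v}} (hκ : κ.IsRegular)
    (hK : Cardinal.mk K < κ) : CardSmallCat K κ := by
  have hle : Cardinal.mk (Σ p : K × K, p.1 ⟶ p.2) ≤ Cardinal.mk (K × K) := by
    apply Cardinal.mk_le_of_injective (f := fun x => x.1)
    rintro ⟨p, f⟩ ⟨q, g⟩ h'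
    dsimp at h'
    subst h'
    have := h p.1 p.2
    congr 1
    exact Subsingleton.elim _ _
  have : Cardinal.mk (K × K) = Cardinal.mk K * Cardinal.mk K := by
    rw [Cardinal.mk_prod]; simp
  refine lt_of_le_of_lt hle ?_
  rw [this]
  exact Cardinal.mul_lt_of_lt hκ.aleph0_le hK hK

/-- A `κ`-small category has fewer than `κ` objects. -/
lemma mk_obj_lt_of_cardSmallCat {K : Type v} [SmallCategory K] {κ : Cardinal.{v}}
    (h : CardSmallCat K κ) : Cardinal.mk K < κ := by
  refine lt_of_le_of_lt (Cardinal.mk_le_of_injective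
    (f := fun d => (⟨(d, d), 𝟙 d⟩ : Σ p : K × K, p.1 ⟶ p.2)) ?_) h
  intro a b hab
  exact congrArg (fun x => x.1.1) hab

/-- A `lam`-filtered category is filtered, for `lam` regular. -/
lemma isFiltered_of_isCardFiltered_s7 {J : Type v} [SmallCategory J] {lam : Cardinal.{v}}
    (hlam : lam.IsRegular) (hJ : IsCardFiltered J lam) : IsFiltered J := by
  apply IsFiltered.of_cocone_nonempty.{v}
  intro K _ _ F
  refine hJ K ?_ F
  have : Finite (Σ p : K × K, p.1 ⟶ p.2) := by
    haveI : Fintype K := FinCategory.fintypeObj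
    haveI : ∀ p : K × K, Finite (p.1 ⟶ p.2) := fun p => by
      haveI : Fintype (p.1 ⟶ p.2) := FinCategory.fintypeHom p.1 p.2
      infer_instance
    infer_instance
  exact lt_of_lt_of_le (Cardinal.mk_lt_aleph0_iff.mpr this) hlam.aleph0_le

end Aux

/-- A diagram of `lam`-presentable objects indexed by a `κ`-small category is a
`lam`-presentable object of the functor category. -/
theorem stmt7 {C : Type u} [Category.{v} C] (κ lam : Cardinal.{v})
    (hκ : κ.IsRegular) (hlam : lam.IsRegular) (hkl : κ ≤ lam)
    {D : Type v} [SmallCategory D] (hD : CardSmallCat D κ)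
    (hcolim : ∀ (J : Type v) [SmallCategory J], IsCardFiltered J lam → HasColimitsOfShape J C)
    (A : D ⥤ C) (hA : ∀ d, IsCardPresentable lam (A.obj d)) :
    IsCardPresentable lam A := by
  intro J _ hJ
  haveI hC : HasColimitsOfShape J C := hcolim J hJ
  haveI : IsFiltered J := isFiltered_of_isCardFiltered_s7 hlam hJ
  -- cardinality facts
  have hDobj : Cardinal.mk D < lam := lt_of_lt_of_le (mk_obj_lt_of_cardSmallCat hD) hkl
  have hsmallDisc : CardSmallCat (Discrete D) lam := by
    refine cardSmallCat_of_thin _ (fun a b => inferInstance) hlam ?_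
    have : Cardinal.mk (Discrete D) = Cardinal.mk D :=
      Cardinal.mk_congr ⟨Discrete.as, Discrete.mk, fun _ => rfl, fun _ => rfl⟩
    rwa [this]
  have hwps : ∀ (T : Type v), Cardinal.mk T < lam → CardSmallCat (WidePushoutShape T) lam := by
    intro T hT
    refine cardSmallCat_of_thin _ (fun a b => (WidePushoutShape.subsingleton_hom a b)) hlam ?_
    have : Cardinal.mk (WidePushoutShape T) = Cardinal.mk T + 1 := Cardinal.mk_option
    rw [this]
    exact Cardinal.add_lt_of_lt hlam.aleph0_le hT
      (lt_of_lt_of_le Cardinal.one_lt_aleph0 hlam.aleph0_le)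
  refine ⟨⟨fun {F} => ?_⟩⟩
  refine preservesColimit_of_preserves_colimit_cocone (colimit.isColimit F) ?_
  -- the doubly mapped colimit cocones in types
  have hcol2 : ∀ d d' : D, IsColimit ((coyoneda.obj (op (A.obj d))).mapCocone
      (((evaluation D C).obj d').mapCocone (colimit.cocone F))) := by
    intro d d'
    haveI := (hA d J hJ).some
    exact isColimitOfPreserves _ (isColimitOfPreserves _ (colimit.isColimit F))
  -- equalizing lemma
  have equalize : ∀ (d d' : D) (m : J) (a b : A.obj d ⟶ (F.obj m).obj d'),
      a ≫ (colimit.ι F m).app d' = b ≫ (colimit.ι F m).app d' →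
      ∃ (k : J) (w : m ⟶ k), a ≫ (F.map w).app d' = b ≫ (F.map w).app d' := by
    intro d d' m a b hab
    have h := (Types.FilteredColimit.isColimit_eq_iff
      ((F ⋙ (evaluation D C).obj d') ⋙ coyoneda.obj (op (A.obj d)))
      (hcol2 d d') (i := m) (j := m) (xi := a) (xj := b)).mp hab
    obtain ⟨k, u, v, huv⟩ := h
    have huv' : a ≫ (F.map u).app d' = b ≫ (F.map v).app d' := huv
    refine ⟨IsFiltered.coeq u v, u ≫ IsFiltered.coeqHom u v, ?_⟩
    calc a ≫ (F.map (u ≫ IsFiltered.coeqHom u v)).app d'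
        = (a ≫ (F.map u).app d') ≫ (F.map (IsFiltered.coeqHom u v)).app d' := by
          rw [F.map_comp]; simp
      _ = (b ≫ (F.map v).app d') ≫ (F.map (IsFiltered.coeqHom u v)).app d' := by rw [huv']
      _ = b ≫ (F.map (v ≫ IsFiltered.coeqHom u v)).app d' := by rw [F.map_comp]; simp
      _ = b ≫ (F.map (u ≫ IsFiltered.coeqHom u v)).app d' := by
          rw [← IsFiltered.coeq_condition]
  apply Types.FilteredColimit.isColimitOf
  · -- joint surjectivity
    intro η
    have step1 : ∀ d : D, ∃ (j : J) (g : A.obj d ⟶ (F.obj j).obj d),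
        g ≫ (colimit.ι F j).app d = η.app d := by
      intro d
      obtain ⟨j, g, hg⟩ := Types.jointly_surjective _ (hcol2 d d) (η.app d)
      exact ⟨j, g, hg⟩
    choose jd gd hgd using step1
    obtain ⟨c1⟩ := hJ (Discrete D) hsmallDisc (Discrete.functor jd)
    let j₀ := c1.pt
    obtain ⟨g', hg'⟩ : ∃ g' : ∀ d, A.obj d ⟶ (F.obj j₀).obj d,
        ∀ d, g' d ≫ (colimit.ι F j₀).app d = η.app d := by
      refine ⟨fun d => gd d ≫ (F.map (c1.ι.app ⟨d⟩)).app d, fun d => ?_⟩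
      have hw := congrArg (fun (t : _ ⟶ (colimit F)) => t.app d) (colimit.w F (c1.ι.app ⟨d⟩))
      dsimp at hw
      rw [Category.assoc, hw, hgd d]
    have step3 : ∀ (d d' : D) (f : d ⟶ d'),
        ∃ (k : J) (w : j₀ ⟶ k),
          (A.map f ≫ g' d') ≫ (F.map w).app d' =
          (g' d ≫ (F.obj j₀).map f) ≫ (F.map w).app d' := by
      intro d d' f
      apply equalize
      have h1 : (A.map f ≫ g' d') ≫ (colimit.ι F j₀).app d' = η.app d ≫ (colimit F).map f := by
        rw [Category.assoc, hg' d']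
        exact η.naturality f
      have h2 : (g' d ≫ (F.obj j₀).map f) ≫ (colimit.ι F j₀).app d' =
          η.app d ≫ (colimit F).map f := by
        rw [Category.assoc, (colimit.ι F j₀).naturality, ← Category.assoc, hg' d]
      rw [h1, h2]
    choose kf wf hwf using step3
    obtain ⟨c2⟩ := hJ _ (hwps _ (lt_of_lt_of_le hD hkl))
      (WidePushoutShape.wideSpan j₀ (fun t : Σ p : D × D, p.1 ⟶ p.2 => kf t.1.1 t.1.2 t.2)
        (fun t => wf t.1.1 t.1.2 t.2))
    let e : j₀ ⟶ c2.pt := c2.ι.app none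
    have he : ∀ (d d' : D) (f : d ⟶ d'),
        wf d d' f ≫ c2.ι.app (some ⟨(d, d'), f⟩) = e := by
      intro d d' f
      have := c2.ι.naturality (WidePushoutShape.Hom.init (⟨(d, d'), f⟩ : Σ p : D × D, p.1 ⟶ p.2))
      simp at this; exact this
    have heq : ∀ (d d' : D) (f : d ⟶ d'),
        (A.map f ≫ g' d') ≫ (F.map e).app d' = (g' d ≫ (F.obj j₀).map f) ≫ (F.map e).app d' := by
      intro d d' f
      rw [← he d d' f, F.map_comp (wf d d' f) (c2.ι.app (some ⟨(d, d'), f⟩)), NatTrans.comp_app, ← Category.assoc, ← Category.assoc,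
        hwf d d' f]
    let ζ : A ⟶ F.obj c2.pt :=
      { app := fun d => g' d ≫ (F.map e).app d
        naturality := by
          intro d d' f
          have h3 : (F.obj j₀).map f ≫ (F.map e).app d' =
              (F.map e).app d ≫ (F.obj c2.pt).map f := (F.map e).naturality f
          rw [Category.assoc, ← h3, ← Category.assoc, ← Category.assoc]
          exact heq d d' f
      }
    refine ⟨c2.pt, ζ, ?_⟩
    have : ζ ≫ colimit.ι F c2.pt = η := by
      ext d
      have hw := congrArg (fun (t : _ ⟶ (colimit F)) => t.app d) (colimit.w F e)
      dsimp at hw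
      dsimp [ζ]
      rw [Category.assoc, hw, hg' d]
    exact this.symm
  · -- injectivity
    intro i j x y hxy
    have hxy' : x ≫ colimit.ι F i = y ≫ colimit.ι F j := hxy
    let m := IsFiltered.max i j
    let u := IsFiltered.leftToMax i j
    let v := IsFiltered.rightToMax i j
    have step : ∀ d : D, ∃ (k : J) (w : m ⟶ k),
        (x.app d ≫ (F.map u).app d) ≫ (F.map w).app d =
        (y.app d ≫ (F.map v).app d) ≫ (F.map w).app d := by
      intro d
      apply equalize d d m
      have h1 := congrArg (fun (t : _ ⟶ (colimit F)) => t.app d) (colimit.w F u)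
      have h2 := congrArg (fun (t : _ ⟶ (colimit F)) => t.app d) (colimit.w F v)
      dsimp at h1 h2
      rw [Category.assoc, Category.assoc, h1, h2, ← NatTrans.comp_app, ← NatTrans.comp_app, hxy']
    choose kd wd hwd using step
    obtain ⟨c3⟩ := hJ _ (hwps D hDobj) (WidePushoutShape.wideSpan m kd wd)
    let e' : m ⟶ c3.pt := c3.ι.app none
    have he' : ∀ d : D, wd d ≫ c3.ι.app (some d) = e' := by
      intro d
      have := c3.ι.naturality (WidePushoutShape.Hom.init d)
      simp at this; exact this
    refine ⟨c3.pt, u ≫ e', v ≫ e', ?_⟩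
    show x ≫ F.map (u ≫ e') = y ≫ F.map (v ≫ e')
    ext d
    rw [← he' d]
    simp only [Functor.map_comp, F.map_comp (wd d) (c3.ι.app (some d)), NatTrans.comp_app, ← Category.assoc]
    rw [hwd d]
end
end

section
/- An essentially small category is (κ,κ)-accessibly generated if and only if it is idempotent-complete. -/
universe v u u₂

open CategoryTheory Limits Opposite

noncomputable section

/-- `C` is a `(κ, lam)`-accessibly generated category. -/
def AccessiblyGenerated (C : Type u) [Category.{v} C] (κ lam : Cardinal.{v}) : Prop :=
  EssentiallySmall.{v} C ∧
  (∀ (J : Type v) [SmallCategory J], CardSmallCat J lam → IsCardFiltered J κ →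
     ∀ F : J ⥤ C, HasColimit F) ∧
  ∀ X : C, ∃ (J : Type v) (inst : SmallCategory J) (F : J ⥤ C) (c : Cocone F),
    CardSmallCat J lam ∧ IsCardFiltered J κ ∧ (∀ j, IsRelPresentable κ lam (F.obj j)) ∧
    Nonempty (IsColimit c) ∧ Nonempty (c.pt ≅ X)

/-! ### Auxiliary material -/

/-- The walking idempotent: one object, two morphisms `𝟙` and `e` with `e ≫ e = e`. -/
def WalkIdem : Type v := PUnit

instance : SmallCategory WalkIdem.{v} where
  Hom _ _ := ULift Bool
  id _ := ⟨true⟩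
  comp f g := ⟨f.down && g.down⟩
  id_comp f := by cases f with | up b => cases b <;> rfl
  comp_id f := by cases f with | up b => cases b <;> rfl
  assoc f g h := by
    cases f with | up a => cases g with | up b => cases h with | up c =>
    cases a <;> cases b <;> cases c <;> rfl

instance : Finite WalkIdem.{v} := inferInstanceAs (Finite PUnit.{v+1})

/-- The unique object of `WalkIdem`. -/
def WalkIdem.star : WalkIdem.{v} := PUnit.unit

/-- The nonidentity idempotent endomorphism of `WalkIdem`. -/
def WalkIdem.e : WalkIdem.star.{v} ⟶ WalkIdem.star.{v} := ⟨false⟩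

theorem WalkIdem.cardSmall {κ : Cardinal.{v}} (hκ : κ.IsRegular) :
    CardSmallCat WalkIdem.{v} κ := by
  haveI : ∀ p : WalkIdem.{v} × WalkIdem.{v}, Finite (p.1 ⟶ p.2) :=
    fun _ => inferInstanceAs (Finite (ULift Bool))
  haveI : Finite (Σ p : WalkIdem.{v} × WalkIdem.{v}, p.1 ⟶ p.2) := inferInstance
  exact lt_of_lt_of_le (Cardinal.lt_aleph0_of_finite _) hκ.aleph0_le

theorem WalkIdem.isFiltered {κ : Cardinal.{v}} : IsCardFiltered WalkIdem.{v} κ := by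
  intro K _ _ F
  exact ⟨{ pt := PUnit.unit
           ι := { app := fun _ => ⟨false⟩
                  naturality := fun k k' f => by
                    show (⟨(F.map f).down && false⟩ : ULift Bool) = ⟨false && true⟩
                    simp } }⟩

/-- The functor from the walking idempotent given by an idempotent. -/
def idemFunctor {C : Type u} [Category.{v} C] (X : C) (p : X ⟶ X) (hp : p ≫ p = p) :
    WalkIdem.{v} ⥤ C where
  obj _ := X
  map f := cond f.down (𝟙 X) p
  map_id _ := rfl
  map_comp {a b c} f g := by
    change ULift Bool at f g
    cases f with | up x => cases g with | up y =>
    cases x <;> cases y <;> simp [hp] <;> rfl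

section Split

variable {J : Type v} [SmallCategory J] {D : Type u₂} [Category.{v} D]

theorem cocone_id_step (t : Cocone (𝟭 J)) {k k' : J} (f : k ⟶ k') :
    f ≫ t.ι.app k' = t.ι.app k := by
  simpa using t.ι.naturality f

/-- Given a cocone over the identity and a splitting of the induced idempotent,
we get a cocone on any functor. -/
def splitCocone (t : Cocone (𝟭 J)) (F : J ⥤ D) {Y : D} (r : F.obj t.pt ⟶ Y) :
    Cocone F where
  pt := Y
  ι := { app := fun k => F.map (t.ι.app k) ≫ r
         naturality := fun k k' f => by
           have h := cocone_id_step t f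
           show F.map f ≫ F.map (t.ι.app k') ≫ r = (F.map (t.ι.app k) ≫ r) ≫ 𝟙 Y
           rw [Category.comp_id, ← Category.assoc, ← F.map_comp, h] }

/-- The above cocone is a colimit. -/
def splitIsColimit (t : Cocone (𝟭 J)) (F : J ⥤ D) {Y : D}
    (i : Y ⟶ F.obj t.pt) (r : F.obj t.pt ⟶ Y)
    (hir : i ≫ r = 𝟙 Y) (hri : r ≫ i = F.map (t.ι.app t.pt)) :
    IsColimit (splitCocone t F r) where
  desc s := i ≫ s.ι.app t.pt
  fac s k := by
    have h1 : t.ι.app k ≫ t.ι.app t.pt = t.ι.app k := cocone_id_step t (t.ι.app k)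
    have h2 : F.map (t.ι.app k) ≫ s.ι.app t.pt = s.ι.app k := by
      simpa using s.ι.naturality (t.ι.app k)
    show (F.map (t.ι.app k) ≫ r) ≫ i ≫ s.ι.app t.pt = s.ι.app k
    rw [Category.assoc, ← Category.assoc r i, hri, ← Category.assoc, ← F.map_comp, h1, h2]
  uniq s m hm := by
    have hr : F.map (t.ι.app t.pt) ≫ r = r := by
      rw [← hri, Category.assoc, hir, Category.comp_id]
    have h := hm t.pt
    show m = i ≫ s.ι.app t.pt
    rw [← h]
    show m = i ≫ (F.map (t.ι.app t.pt) ≫ r) ≫ m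
    exact ((Category.id_comp m).symm.trans ((eq_whisker hir m).symm.trans
      (Category.assoc i r m))).trans (whisker_eq i (eq_whisker hr m)).symm

end Split

section IdemComplete

variable {C : Type u} [Category.{v} C]

/-- In an idempotent-complete category, every functor from a category admitting a
cocone over its identity has a colimit cocone. -/
theorem splitColimitCocone (hC : IsIdempotentComplete C) {J : Type v} [SmallCategory J]
    (t : Cocone (𝟭 J)) (F : J ⥤ C) :
    ∃ (Y : C) (i : Y ⟶ F.obj t.pt) (r : F.obj t.pt ⟶ Y) (hir : i ≫ r = 𝟙 Y)
      (hri : r ≫ i = F.map (t.ι.app t.pt)), True := by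
  have h1 : t.ι.app t.pt ≫ t.ι.app t.pt = t.ι.app t.pt := cocone_id_step t (t.ι.app t.pt)
  have he : F.map (t.ι.app t.pt) ≫ F.map (t.ι.app t.pt) = F.map (t.ι.app t.pt) := by
    rw [← F.map_comp, h1]
  obtain ⟨Y, i, r, hir, hri⟩ := hC.idempotents_split (F.obj t.pt) (F.map (t.ι.app t.pt)) he
  exact ⟨Y, i, r, hir, hri, trivial⟩

/-- Every object of an idempotent-complete category is `(κ,κ)`-presentable:
the colimits in question are absolute. -/
theorem allRelPresentable (hC : IsIdempotentComplete C) {κ : Cardinal.{v}} (A : C) :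
    IsRelPresentable κ κ A := by
  intro J _ hsmall hfilt
  obtain ⟨t⟩ := hfilt J hsmall (𝟭 J)
  constructor
  constructor
  intro F
  obtain ⟨Y, i, r, hir, hri, -⟩ := splitColimitCocone hC t F
  have h₀ := splitIsColimit t F i r hir hri
  set G := coyoneda.obj (op A)
  have hmap : IsColimit (G.mapCocone (splitCocone t F r)) := by
    refine IsColimit.ofIsoColimit
      (splitIsColimit t (F ⋙ G) (G.map i) (G.map r) ?_ ?_)
      (Cocones.ext (Iso.refl _) fun k => ?_)
    · rw [← G.map_comp, hir, G.map_id]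
    · rw [← G.map_comp, hri]; rfl
    · show ((F ⋙ G).map (t.ι.app k) ≫ G.map r) ≫ 𝟙 _ = G.map (F.map (t.ι.app k) ≫ r)
      rw [Category.comp_id, G.map_comp]; rfl
  exact preservesColimit_of_preserves_colimit_cocone h₀ hmap

end IdemComplete

/-- An essentially small category is `(κ,κ)`-accessibly generated iff it is
idempotent-complete. -/
theorem stmt14 (κ : Cardinal.{v}) (hκ : κ.IsRegular)
    (C : Type u) [Category.{v} C] [EssentiallySmall.{v} C] :
    AccessiblyGenerated C κ κ ↔ IsIdempotentComplete C := by
  constructor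
  · rintro ⟨-, hcolim, -⟩
    constructor
    intro X p hp
    haveI : HasColimit (idemFunctor X p hp) :=
      hcolim WalkIdem (WalkIdem.cardSmall hκ) WalkIdem.isFiltered _
    set F := idemFunctor X p hp with hF
    let c := colimit.cocone F
    let hc : IsColimit c := colimit.isColimit F
    let ι : X ⟶ c.pt := c.ι.app PUnit.unit
    have hpι : p ≫ ι = ι := colimit.w F WalkIdem.e
    let s : Cocone F :=
      { pt := X
        ι := { app := fun _ => p
               naturality := fun k k' f => by
                 change ULift Bool at f
                 cases f with | up b =>
                 cases b
                 · show p ≫ p = p ≫ 𝟙 X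
                   rw [hp, Category.comp_id]
                 · show 𝟙 X ≫ p = p ≫ 𝟙 X
                   rw [Category.id_comp, Category.comp_id] } }
    let r : c.pt ⟶ X := hc.desc s
    have hfac : ι ≫ r = p := hc.fac s PUnit.unit
    have hretr : r ≫ ι = 𝟙 c.pt := by
      refine hc.hom_ext fun j => ?_
      rw [← Category.assoc]
      show (ι ≫ r) ≫ ι = ι ≫ 𝟙 c.pt
      rw [hfac, hpι, Category.comp_id]
    exact ⟨c.pt, r, ι, hretr, hfac⟩
  · intro hC
    refine ⟨inferInstance, ?_, ?_⟩
    · intro J _ hsmall hfilt F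
      obtain ⟨t⟩ := hfilt J hsmall (𝟭 J)
      obtain ⟨Y, i, r, hir, hri, -⟩ := splitColimitCocone hC t F
      exact ⟨⟨⟨splitCocone t F r, splitIsColimit t F i r hir hri⟩⟩⟩
    · intro X
      refine ⟨WalkIdem, inferInstance, (Functor.const _).obj X,
        { pt := X, ι := { app := fun _ => 𝟙 X, naturality := fun _ _ _ => by simp } },
        WalkIdem.cardSmall hκ, WalkIdem.isFiltered,
        fun _ => allRelPresentable hC X, ⟨?_⟩, ⟨Iso.refl X⟩⟩
      exact
        { desc := fun s => s.ι.app PUnit.unit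
          fac := fun s j => by cases j; exact Category.id_comp _
          uniq := fun s m hm => (Category.id_comp m).symm.trans (hm PUnit.unit) }
end
end
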